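/- Let G be a group, let (ρ_1, …, ρ_r) be a tuple of elements of G, let 1 ≤ p ≤ q ≤ r, and let H be the subgroup of G generated by ρ_p, …, ρ_q. Suppose that the product ρ_p ρ_{p+1} ⋯ ρ_q lies in the center of H, and let b ∈ H. Then the tuple (ρ_1, …, ρ_{p−1}, b^{−1} ρ_p b, b^{−1} ρ_{p+1} b, …, b^{−1} ρ_q b, ρ_{q+1}, …, ρ_r) is Hurwitz equivalent to (ρ_1, …, ρ_r). -/

import Mathlib

/-- An elementary Hurwitz move on tuples (lists) of elements of a group `G`: two consecutive
entries `(a, b)` are replaced by `(a b a⁻¹, a)`. -/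
inductive HurwitzMove {G : Type*} [Group G] : List G → List G → Prop
  | move (l₁ l₂ : List G) (a b : G) :
      HurwitzMove (l₁ ++ a :: b :: l₂) (l₁ ++ (a * b * a⁻¹) :: a :: l₂)

/-- Hurwitz equivalence of tuples (lists) of elements of a group `G`: the equivalence
relation generated by elementary Hurwitz moves (the inverse move, replacing `(a, b)` by
`(b, b⁻¹ a b)`, is included since we take the equivalence closure). -/
def HurwitzEquiv {G : Type*} [Group G] : List G → List G → Prop :=
  Relation.EqvGen HurwitzMove

namespace HurwitzAux
variable {G : Type*} [Group G]

theorem move_pad (l₁ l₂ : List G) {x y : List G} (h : HurwitzMove x y) :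
    HurwitzMove (l₁ ++ x ++ l₂) (l₁ ++ y ++ l₂) := by
  cases h with
  | move u v a b =>
    have := HurwitzMove.move (l₁ ++ u) (v ++ l₂) a b
    simpa [List.append_assoc] using this

theorem equiv_pad (l₁ l₂ : List G) {x y : List G} (h : HurwitzEquiv x y) :
    HurwitzEquiv (l₁ ++ x ++ l₂) (l₁ ++ y ++ l₂) := by
  induction h with
  | rel a b hab => exact Relation.EqvGen.rel _ _ (move_pad l₁ l₂ hab)
  | refl a => exact Relation.EqvGen.refl _
  | symm a b _ ih => exact Relation.EqvGen.symm _ _ ih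
  | trans a b c _ _ ih₁ ih₂ => exact Relation.EqvGen.trans _ _ _ ih₁ ih₂

theorem equiv_cons (c : G) {x y : List G} (h : HurwitzEquiv x y) :
    HurwitzEquiv (c :: x) (c :: y) := by
  simpa using equiv_pad [c] [] h

theorem push (a : G) (t : List G) :
    HurwitzEquiv (a :: t) (t.map (fun x => a * x * a⁻¹) ++ [a]) := by
  induction t with
  | nil => simpa [HurwitzEquiv] using Relation.EqvGen.refl (r := HurwitzMove) [a]
  | cons b rest ih =>
    have h1 : HurwitzMove (a :: b :: rest) ((a*b*a⁻¹) :: a :: rest) := by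
      simpa using HurwitzMove.move [] rest a b
    exact Relation.EqvGen.trans _ _ _ (Relation.EqvGen.rel _ _ h1)
      (by simpa [HurwitzEquiv] using equiv_cons (a*b*a⁻¹) ih)

theorem rotateOne (a : G) (t : List G) :
    HurwitzEquiv (a :: t) (t ++ [t.prod⁻¹ * a * t.prod]) := by
  induction t generalizing a with
  | nil => simpa [HurwitzEquiv] using Relation.EqvGen.refl (r := HurwitzMove) [a]
  | cons b rest ih =>
    have h1 : HurwitzMove (b :: (b⁻¹*a*b) :: rest) (a :: b :: rest) := by
      have := HurwitzMove.move [] rest b (b⁻¹*a*b)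
      simpa [mul_assoc] using this
    refine Relation.EqvGen.trans _ _ _
      (Relation.EqvGen.symm _ _ (Relation.EqvGen.rel _ _ h1)) ?_
    have := equiv_cons b (ih (b⁻¹*a*b))
    simpa [HurwitzEquiv, mul_assoc, List.prod_cons, mul_inv_rev] using this

theorem conj_prod (g : G) (l : List G) :
    (l.map (fun x => g * x * g⁻¹)).prod = g * l.prod * g⁻¹ := by
  induction l with
  | nil => simp
  | cons b rest ih =>
    simp only [List.map_cons, List.prod_cons, ih]
    group

/-- Swapping the two halves preserves the product, under centrality. -/
theorem prod_swap (H : Subgroup G) (u v : List G) (h1 : ∀ x ∈ u ++ v, x ∈ H)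
    (h2 : ∀ h ∈ H, (u ++ v).prod * h = h * (u ++ v).prod) :
    (v ++ u).prod = (u ++ v).prod := by
  have hu : u.prod ∈ H := list_prod_mem (fun x hx => h1 x (by simp [hx]))
  have h := h2 u.prod hu
  simp only [List.prod_append] at h ⊢
  -- h : u.prod * v.prod * u.prod = u.prod * (u.prod * v.prod)
  apply mul_left_cancel (a := u.prod)
  rw [← mul_assoc, ← h, mul_assoc]

/-- Rotation of a block whose product is central among its entries' subgroup. -/
theorem rot (H : Subgroup G) :
    ∀ (u v : List G), (∀ x ∈ u ++ v, x ∈ H) →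
      (∀ h ∈ H, (u ++ v).prod * h = h * (u ++ v).prod) →
      HurwitzEquiv (u ++ v) (v ++ u) := by
  intro u
  induction u with
  | nil => intro v _ _; simpa [HurwitzEquiv] using Relation.EqvGen.refl (r := HurwitzMove) v
  | cons a u' ih =>
    intro v h1 h2
    have haH : a ∈ H := h1 a (by simp)
    set t := u' ++ v with ht
    have hcomm : t.prod * a = a * t.prod := by
      apply mul_left_cancel (a := a)
      have h := h2 a haH
      simp only [List.cons_append, List.prod_cons, ← ht] at h
      rw [← mul_assoc]
      exact h
    have hfix : t.prod⁻¹ * a * t.prod = a := by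
      rw [mul_assoc, ← hcomm, inv_mul_cancel_left]
    have step1 : HurwitzEquiv ((a :: u') ++ v) (u' ++ (v ++ [a])) := by
      have := rotateOne a t
      rw [hfix] at this
      simpa [ht, List.append_assoc] using this
    have hprodeq : (u' ++ (v ++ [a])).prod = ((a :: u') ++ v).prod := by
      have e1 : (u' ++ (v ++ [a])).prod = t.prod * a := by
        simp [ht, List.prod_append, mul_assoc]
      have e2 : ((a :: u') ++ v).prod = a * t.prod := by
        simp [ht, List.prod_append, mul_assoc]
      rw [e1, e2, hcomm]
    have step2 : HurwitzEquiv (u' ++ (v ++ [a])) ((v ++ [a]) ++ u') := by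
      apply ih
      · intro x hx
        simp only [List.mem_append, List.mem_singleton] at hx
        rcases hx with h | h | h
        · exact h1 x (by simp [h])
        · exact h1 x (by simp [h])
        · subst h; exact haH
      · intro h hh
        rw [hprodeq]; exact h2 h hh
    refine Relation.EqvGen.trans _ _ _ step1 ?_
    simpa [HurwitzEquiv, List.append_assoc] using step2

/-- Conjugating a block by one of its entries. -/
theorem conj_entry (H : Subgroup G) (m' : List G) (g : G) (hg : g ∈ m')
    (h1 : ∀ x ∈ m', x ∈ H)
    (h2 : ∀ h ∈ H, m'.prod * h = h * m'.prod) :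
    HurwitzEquiv m' (m'.map (fun x => g * x * g⁻¹)) := by
  obtain ⟨u, v, rfl⟩ := List.append_of_mem hg
  have hgH : g ∈ H := h1 g (by simp)
  set P := (u ++ g :: v).prod with hP
  have hPg : P * g = g * P := h2 g hgH
  set w := v ++ u with hw
  -- g :: w = (g :: v) ++ u as lists
  have egw : (g :: v) ++ u = g :: w := by simp [hw]
  -- step 1: rotate g to the front
  have s1 : HurwitzEquiv (u ++ g :: v) (g :: w) := by
    have := rot H u (g :: v) h1 h2
    rwa [egw] at this
  -- the product is preserved by rotation
  have hprod1 : (g :: w).prod = P := by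
    rw [← egw]; exact prod_swap H u (g :: v) h1 h2
  have h1w : ∀ x ∈ g :: w, x ∈ H := by
    intro x hx
    simp only [hw, List.mem_cons, List.mem_append] at hx
    rcases hx with h | h | h
    · subst h; exact hgH
    · exact h1 x (by simp [h])
    · exact h1 x (by simp [h])
  -- step 2: push g through w
  have s2 : HurwitzEquiv (g :: w) (w.map (fun x => g * x * g⁻¹) ++ [g]) := push g w
  -- product of the pushed list
  have hprod2 : (w.map (fun x => g * x * g⁻¹) ++ [g]).prod = P := by
    rw [List.prod_append, conj_prod]
    simp only [List.prod_cons, List.prod_nil, mul_one]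
    rw [mul_assoc, inv_mul_cancel, mul_one]
    have : (g :: w).prod = g * w.prod := by simp
    rw [← this, hprod1]
  have h1map : ∀ x ∈ w.map (fun x => g * x * g⁻¹), x ∈ H := by
    intro x hx
    simp only [List.mem_map] at hx
    obtain ⟨y, hy, rfl⟩ := hx
    exact mul_mem (mul_mem hgH (h1w y (by simp [hy]))) (inv_mem hgH)
  -- step 3: rotate g back to the front
  have s3 : HurwitzEquiv (w.map (fun x => g * x * g⁻¹) ++ [g])
      (g :: w.map (fun x => g * x * g⁻¹)) := by
    have := rot H (w.map (fun x => g * x * g⁻¹)) [g] ?_ ?_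
    · simpa using this
    · intro x hx
      simp only [List.mem_append, List.mem_singleton] at hx
      rcases hx with h | h
      · exact h1map x h
      · subst h; exact hgH
    · intro h hh
      rw [hprod2]; exact h2 h hh
  -- identification: g :: w.map c = ((g :: v) ++ u).map c
  have e4 : g :: w.map (fun x => g * x * g⁻¹) = ((g :: v) ++ u).map (fun x => g * x * g⁻¹) := by
    simp [hw, mul_assoc]
  -- step 4: rotate the conjugated list back
  have hprod3 : (((g :: v) ++ u).map (fun x => g * x * g⁻¹)).prod = P := by
    rw [conj_prod, egw, hprod1, ← hPg, mul_assoc, mul_inv_cancel, mul_one]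
  have s4 : HurwitzEquiv (((g :: v) ++ u).map (fun x => g * x * g⁻¹))
      ((u ++ g :: v).map (fun x => g * x * g⁻¹)) := by
    have := rot H ((g :: v).map (fun x => g * x * g⁻¹)) (u.map (fun x => g * x * g⁻¹)) ?_ ?_
    · simpa [List.map_append] using this
    · intro x hx
      rw [← List.map_append] at hx
      simp only [List.mem_map] at hx
      obtain ⟨y, hy, rfl⟩ := hx
      have hyH : y ∈ H := by
        simp only [List.mem_append, List.mem_cons] at hy
        rcases hy with (h | h) | h
        · subst h; exact hgH
        · exact h1 y (by simp [h])
        · exact h1 y (by simp [h])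
      exact mul_mem (mul_mem hgH hyH) (inv_mem hgH)
    · intro h hh
      rw [← List.map_append, hprod3]
      exact h2 h hh
  exact Relation.EqvGen.trans _ _ _ s1 (Relation.EqvGen.trans _ _ _ s2
    (Relation.EqvGen.trans _ _ _ s3 (by rw [e4]; exact s4)))

end HurwitzAux

namespace HurwitzAux2
variable {G : Type*} [Group G]
open HurwitzAux

theorem conj_entry_inv (H : Subgroup G) (m' : List G) (g : G) (hg : g ∈ m')
    (h1 : ∀ x ∈ m', x ∈ H)
    (h2 : ∀ h ∈ H, m'.prod * h = h * m'.prod) :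
    HurwitzEquiv m' (m'.map (fun x => g⁻¹ * x * g)) := by
  have hgH := h1 g hg
  set m'' := m'.map (fun x => g⁻¹ * x * g) with hm
  have hg'' : g ∈ m'' := by
    rw [hm, List.mem_map]; exact ⟨g, hg, by group⟩
  have h1'' : ∀ x ∈ m'', x ∈ H := by
    intro x hx; rw [hm, List.mem_map] at hx
    obtain ⟨y, hy, rfl⟩ := hx
    exact mul_mem (mul_mem (inv_mem hgH) (h1 y hy)) hgH
  have hprod : m''.prod = m'.prod := by
    have e : m''.prod = g⁻¹ * m'.prod * g := by
      rw [hm]; simpa using conj_prod g⁻¹ m'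
    rw [e, mul_assoc, h2 g hgH, inv_mul_cancel_left]
  have h2'' : ∀ h ∈ H, m''.prod * h = h * m''.prod := by
    intro h hh; rw [hprod]; exact h2 h hh
  have key := conj_entry H m'' g hg'' h1'' h2''
  have e : m''.map (fun x => g * x * g⁻¹) = m' := by
    rw [hm, List.map_map]
    have : ((fun x => g * x * g⁻¹) ∘ fun x => g⁻¹ * x * g) = id := by
      funext x; simp [Function.comp, mul_assoc]
    rw [this, List.map_id]
  rw [e] at key
  exact Relation.EqvGen.symm _ _ key

theorem main_list (m : List G)
    (hcentral : ∀ h ∈ Subgroup.closure {x | x ∈ m}, m.prod * h = h * m.prod) :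
    ∀ L : List G, (∀ g ∈ L, g ∈ {x : G | x ∈ m} ∨ g⁻¹ ∈ {x : G | x ∈ m}) →
      HurwitzEquiv (m.map fun x => L.prod⁻¹ * x * L.prod) m := by
  set H := Subgroup.closure {x : G | x ∈ m} with hH
  intro L
  induction L with
  | nil => intro _; simpa [HurwitzEquiv] using Relation.EqvGen.refl (r := HurwitzMove) m
  | cons g L' ih =>
    intro hL
    have memH : ∀ y : G, y ∈ m ∨ y⁻¹ ∈ m → y ∈ H := by
      rintro y (h | h)
      · exact Subgroup.subset_closure h
      · simpa using inv_mem (Subgroup.subset_closure (show y⁻¹ ∈ {x : G | x ∈ m} from h))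
    have hgH : g ∈ H := memH g (hL g (by simp))
    have hcH : L'.prod ∈ H := list_prod_mem (fun y hy => memH y (hL y (by simp [hy])))
    set c := L'.prod with hc
    set m' := m.map (fun x => c⁻¹ * x * c) with hm'
    have ihm : HurwitzEquiv m' m := ih (fun y hy => hL y (by simp [hy]))
    have h1' : ∀ x ∈ m', x ∈ H := by
      intro x hx; rw [hm', List.mem_map] at hx
      obtain ⟨y, hy, rfl⟩ := hx
      exact mul_mem (mul_mem (inv_mem hcH) (Subgroup.subset_closure hy)) hcH
    have hprod' : m'.prod = m.prod := by
      have e : m'.prod = c⁻¹ * m.prod * c := by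
        rw [hm']; simpa using conj_prod c⁻¹ m
      rw [e, mul_assoc, hcentral c hcH, inv_mul_cancel_left]
    have h2' : ∀ h ∈ H, m'.prod * h = h * m'.prod := by
      intro h hh; rw [hprod']; exact hcentral h hh
    rcases hL g (by simp) with hgS | hgS
    · have he : c⁻¹ * g * c ∈ m' := List.mem_map.mpr ⟨g, hgS, rfl⟩
      have key := conj_entry_inv H m' (c⁻¹ * g * c) he h1' h2'
      have e : m'.map (fun x => (c⁻¹ * g * c)⁻¹ * x * (c⁻¹ * g * c))
          = m.map (fun x => (g :: L').prod⁻¹ * x * (g :: L').prod) := by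
        rw [hm', List.map_map]
        apply List.map_congr_left
        intro x _
        simp only [Function.comp_apply, List.prod_cons, ← hc]
        group
      rw [e] at key
      exact Relation.EqvGen.trans _ _ _ (Relation.EqvGen.symm _ _ key) ihm
    · have he : c⁻¹ * g⁻¹ * c ∈ m' := List.mem_map.mpr ⟨g⁻¹, hgS, rfl⟩
      have key := conj_entry H m' (c⁻¹ * g⁻¹ * c) he h1' h2'
      have e : m'.map (fun x => (c⁻¹ * g⁻¹ * c) * x * (c⁻¹ * g⁻¹ * c)⁻¹)
          = m.map (fun x => (g :: L').prod⁻¹ * x * (g :: L').prod) := by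
        rw [hm', List.map_map]
        apply List.map_congr_left
        intro x _
        simp only [Function.comp_apply, List.prod_cons, ← hc]
        group
      rw [e] at key
      exact Relation.EqvGen.trans _ _ _ (Relation.EqvGen.symm _ _ key) ihm

end HurwitzAux2

/-- **Partial conjugation (Lemma 4.4).** Let `(ρ_1, …, ρ_r)` be a tuple of elements of a
group `G`, decomposed as `l₁ ++ m ++ l₂` where `m = (ρ_p, …, ρ_q)` is a consecutive block.
Let `H` be the subgroup generated by the entries of the block `m`. If the product
`ρ_p ρ_{p+1} ⋯ ρ_q` is central in `H`, and `b ∈ H`, then the tuple obtained by conjugating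
every entry of the block by `b` is Hurwitz equivalent to the original tuple. -/
theorem partial_conjugation_hurwitz {G : Type*} [Group G] (l₁ m l₂ : List G) (b : G)
    (hb : b ∈ Subgroup.closure {x | x ∈ m})
    (hcentral : ∀ h ∈ Subgroup.closure {x | x ∈ m}, m.prod * h = h * m.prod) :
    HurwitzEquiv (l₁ ++ m.map (fun x => b⁻¹ * x * b) ++ l₂) (l₁ ++ m ++ l₂) := by
  have hb' : b ∈ Submonoid.closure ({x | x ∈ m} ∪ {x | x ∈ m}⁻¹) := by
    rw [← Subgroup.closure_toSubmonoid]
    exact hb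
  obtain ⟨L, hL, hLprod⟩ := Submonoid.exists_list_of_mem_closure hb'
  have hL' : ∀ g ∈ L, g ∈ {x : G | x ∈ m} ∨ g⁻¹ ∈ {x : G | x ∈ m} := by
    intro g hg
    rcases hL g hg with h | h
    · exact Or.inl h
    · exact Or.inr (Set.mem_inv.mp h)
  have := HurwitzAux2.main_list m hcentral L hL'
  rw [hLprod] at this
  exact HurwitzAux.equiv_pad l₁ l₂ this
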